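/- Let I be an interval, X = (X_n) an I-valued submartingale, δ ≥ 0, and f : I → ℝ a non-decreasing δ-convex function such that e^{f(X_n)} is integrable for each n. Then the process Y defined by Y_n := e^{f(X_n)} is uniformly e^{−δ}-achieving, i.e., E(Y_n | F_m) ≥ e^{−δ} Y_m a.s. for all 0 ≤ m < n. -/

import Mathlib

open MeasureTheory Filter Set

section AuxLemmas

/-- Every subset of `ℝ` has a countable downward-cofinal subset. -/
lemma exists_countable_cofinal_below (S : Set ℝ) :
    ∃ T : Set ℝ, T.Countable ∧ T ⊆ S ∧ ∀ x ∈ S, ∃ y ∈ T, y ≤ x := by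
  classical
  -- for each rational q, choose an element of S below q if it exists
  have pick : ∀ q : ℚ, ∃ y : ℝ, (S ∩ Iio (q:ℝ)).Nonempty → y ∈ S ∩ Iio (q:ℝ) := by
    intro q
    by_cases h : (S ∩ Iio (q:ℝ)).Nonempty
    · exact ⟨h.choose, fun _ => h.choose_spec⟩
    · exact ⟨0, fun h' => absurd h' h⟩
  choose g hg using pick
  refine ⟨(S ∩ {sInf S}) ∪ (⋃ q : ℚ, if (S ∩ Iio (q:ℝ)).Nonempty then {g q} else ∅),
    ?_, ?_, ?_⟩
  · refine Set.Countable.union (Set.Subsingleton.countable ?_) (countable_iUnion fun q => ?_)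
    · exact fun a ha b hb => by simp_all
    · split <;> simp
  · rintro x (⟨hx, -⟩ | hx)
    · exact hx
    · simp only [mem_iUnion] at hx
      obtain ⟨q, hq⟩ := hx
      by_cases h : (S ∩ Iio (q:ℝ)).Nonempty
      · rw [if_pos h] at hq
        rw [mem_singleton_iff] at hq
        exact hq ▸ (hg q h).1
      · rw [if_neg h] at hq; exact absurd hq (notMem_empty x)
  · intro x hx
    by_cases hmin : x = sInf S ∧ BddBelow S
    · exact ⟨x, Or.inl ⟨hx, by simp [hmin.1]⟩, le_rfl⟩
    · -- find a rational q ≤ x with S ∩ Iio q nonempty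
      have : ∃ q : ℚ, (q:ℝ) ≤ x ∧ (S ∩ Iio (q:ℝ)).Nonempty := by
        by_cases hb : BddBelow S
        · have hlt : sInf S < x := by
            rcases lt_or_eq_of_le (csInf_le hb hx) with h | h
            · exact h
            · exact absurd ⟨h.symm, hb⟩ hmin
          obtain ⟨q, hq1, hq2⟩ := exists_rat_btwn hlt
          exact ⟨q, hq2.le, (csInf_lt_iff hb ⟨x, hx⟩).mp hq1⟩
        · obtain ⟨q, hq⟩ := exists_rat_lt x
          rw [not_bddBelow_iff] at hb
          obtain ⟨y, hy, hy'⟩ := hb q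
          exact ⟨q, hq.le, ⟨y, hy, hy'⟩⟩
      obtain ⟨q, hqx, hq⟩ := this
      refine ⟨g q, Or.inr ?_, ?_⟩
      · simp only [mem_iUnion]
        exact ⟨q, by rw [if_pos hq]; exact rfl⟩
      · exact le_trans (le_of_lt (hg q hq).2) hqx

section
variable {I : Set ℝ} {δ : ℝ} {f : ℝ → ℝ}

/-- Chord inequality from δ-convexity combined with convexity of `exp`. -/
lemma exp_interp {a b u : ℝ} (hu0 : 0 ≤ u) (hu1 : u ≤ 1) :
    Real.exp (u * a + (1 - u) * b) ≤ u * Real.exp a + (1 - u) * Real.exp b := by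
  have := convexOn_exp.2 (mem_univ a) (mem_univ b) hu0 (sub_nonneg.mpr hu1) (by ring)
  simpa [smul_eq_mul] using this

lemma chord_ineq (hconv : ∀ x ∈ I, ∀ y ∈ I, ∀ t : ℝ, 0 ≤ t → t ≤ 1 →
      f (t * x + (1 - t) * y) ≤ t * f x + (1 - t) * f y + δ)
    {x1 x0 x2 : ℝ} (h1 : x1 ∈ I) (h0 : x0 ∈ I) (h2 : x2 ∈ I)
    (h10 : x1 < x0) (h02 : x0 < x2) :
    Real.exp (-δ) * Real.exp (f x0) * (x2 - x1) ≤
      (x2 - x0) * Real.exp (f x1) + (x0 - x1) * Real.exp (f x2) := by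
  set t : ℝ := (x2 - x0) / (x2 - x1) with ht
  have hD : (0:ℝ) < x2 - x1 := by linarith
  have ht0 : 0 ≤ t := div_nonneg (by linarith) hD.le
  have ht1 : t ≤ 1 := (div_le_one hD).mpr (by linarith)
  have hx0 : t * x1 + (1 - t) * x2 = x0 := by
    have h : t * (x2 - x1) = x2 - x0 := by rw [ht]; field_simp
    linear_combination (-1 : ℝ) * h
  have hf0 : f x0 ≤ t * f x1 + (1 - t) * f x2 + δ := by
    have := hconv x1 h1 x2 h2 t ht0 ht1
    rwa [hx0] at this
  have hexp : Real.exp (f x0) ≤ Real.exp (t * f x1 + (1 - t) * f x2 + δ) :=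
    Real.exp_le_exp.mpr hf0
  have hjensen : Real.exp (t * f x1 + (1 - t) * f x2) ≤
      t * Real.exp (f x1) + (1 - t) * Real.exp (f x2) := exp_interp ht0 ht1
  have key : Real.exp (-δ) * Real.exp (f x0) ≤
      t * Real.exp (f x1) + (1 - t) * Real.exp (f x2) := by
    calc Real.exp (-δ) * Real.exp (f x0)
        ≤ Real.exp (-δ) * Real.exp (t * f x1 + (1 - t) * f x2 + δ) := by
          exact mul_le_mul_of_nonneg_left hexp (Real.exp_nonneg _)
      _ = Real.exp (t * f x1 + (1 - t) * f x2) := by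
          rw [← Real.exp_add]; congr 1; ring
      _ ≤ t * Real.exp (f x1) + (1 - t) * Real.exp (f x2) := hjensen
  have := mul_le_mul_of_nonneg_right key hD.le
  calc Real.exp (-δ) * Real.exp (f x0) * (x2 - x1)
      ≤ (t * Real.exp (f x1) + (1 - t) * Real.exp (f x2)) * (x2 - x1) := this
    _ = (x2 - x0) * Real.exp (f x1) + (x0 - x1) * Real.exp (f x2) := by
        have h : t * (x2 - x1) = x2 - x0 := by rw [ht]; field_simp
        linear_combination (Real.exp (f x1) - Real.exp (f x2)) * h

/-- Supporting line for `e^{-δ} e^{f}` at a non-maximal point of `I`. -/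
lemma support_line (hδ : 0 ≤ δ) (hmono : MonotoneOn f I)
    (hconv : ∀ x ∈ I, ∀ y ∈ I, ∀ t : ℝ, 0 ≤ t → t ≤ 1 →
      f (t * x + (1 - t) * y) ≤ t * f x + (1 - t) * f y + δ)
    {x0 y : ℝ} (h0 : x0 ∈ I) (hy : y ∈ I) (hxy : x0 < y) :
    ∃ c : ℝ, 0 ≤ c ∧ ∀ x ∈ I,
      Real.exp (-δ) * Real.exp (f x0) + c * (x - x0) ≤ Real.exp (f x) := by
  set p : ℝ := Real.exp (-δ) * Real.exp (f x0) with hp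
  have hple : p ≤ Real.exp (f x0) := by
    rw [hp, ← Real.exp_add]
    exact Real.exp_le_exp.mpr (by linarith)
  set S : Set ℝ := {s | ∃ x1 ∈ I, x1 < x0 ∧ s = (p - Real.exp (f x1)) / (x0 - x1)} with hS
  -- every left slope is at most every right slope
  have hLR : ∀ s ∈ S, ∀ x2 ∈ I, x0 < x2 → s ≤ (Real.exp (f x2) - p) / (x2 - x0) := by
    rintro s ⟨x1, hx1, h10, rfl⟩ x2 hx2 h02
    rw [div_le_div_iff₀ (by linarith) (by linarith)]
    have := chord_ineq hconv hx1 h0 hx2 h10 h02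
    rw [← hp] at this; nlinarith
  have hbdd : BddAbove S := ⟨(Real.exp (f y) - p) / (y - x0), fun s hs => hLR s hs y hy hxy⟩
  set c : ℝ := max 0 (sSup S) with hc
  refine ⟨c, le_max_left _ _, fun x hx => ?_⟩
  rcases lt_trichotomy x x0 with hlt | heq | hgt
  · -- left point: need c ≥ slope
    have hmem : (p - Real.exp (f x)) / (x0 - x) ∈ S := ⟨x, hx, hlt, rfl⟩
    have hcs : (p - Real.exp (f x)) / (x0 - x) ≤ c :=
      le_trans (le_csSup hbdd hmem) (le_max_right _ _)
    rw [div_le_iff₀ (by linarith)] at hcs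
    nlinarith [le_max_right 0 (sSup S)]
  · subst heq; simpa using hple
  · -- right point: need c ≤ right slope
    have h1 : Real.exp (f x0) ≤ Real.exp (f x) :=
      Real.exp_le_exp.mpr (hmono h0 hx hgt.le)
    have hple : p ≤ Real.exp (f x) := le_trans hple h1
    have hcle : c ≤ (Real.exp (f x) - p) / (x - x0) := by
      apply max_le
      · exact div_nonneg (by linarith) (by linarith)
      · rcases Set.eq_empty_or_nonempty S with hSe | hSne
        · rw [hSe, Real.sSup_empty]
          exact div_nonneg (by linarith) (by linarith)
        · exact csSup_le hSne (fun s hs => hLR s hs x hx hgt)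
    rw [le_div_iff₀ (by linarith)] at hcle
    linarith

/-- A countable family of affine minorants of `e^{f}` on `I` which `ε`-approximates
`e^{-δ} e^{f}` at every non-maximal point of `I`. -/
lemma line_family (hδ : 0 ≤ δ) (hmono : MonotoneOn f I)
    (hconv : ∀ x ∈ I, ∀ y ∈ I, ∀ t : ℝ, 0 ≤ t → t ≤ 1 →
      f (t * x + (1 - t) * y) ≤ t * f x + (1 - t) * f y + δ)
    {ε : ℝ} (hε : 0 < ε) :
    ∃ T : Set (ℝ × ℝ), T.Countable ∧
      (∀ cd ∈ T, 0 ≤ cd.1 ∧ ∀ x ∈ I, cd.1 * x + cd.2 ≤ Real.exp (f x)) ∧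
      ∀ x0 ∈ I, (∃ y ∈ I, x0 < y) →
        ∃ cd ∈ T, Real.exp (-δ) * Real.exp (f x0) - ε ≤ cd.1 * x0 + cd.2 := by
  classical
  set p : ℝ → ℝ := fun x => Real.exp (-δ) * Real.exp (f x) with hp
  set S : ℤ → Set ℝ := fun k => {x | x ∈ I ∧ (∃ y ∈ I, x < y) ∧ (k : ℝ) * ε < p x} with hS
  choose Q hQc hQsub hQcof using fun k => exists_countable_cofinal_below (S k)
  have hch : ∀ x' : ℝ, ∃ cd : ℝ × ℝ, (x' ∈ I ∧ ∃ y ∈ I, x' < y) →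
      0 ≤ cd.1 ∧ (∀ x ∈ I, cd.1 * x + cd.2 ≤ Real.exp (f x)) ∧
        cd.1 * x' + cd.2 = p x' := by
    intro x'
    by_cases h : x' ∈ I ∧ ∃ y ∈ I, x' < y
    · obtain ⟨hx'I, y, hy, hxy⟩ := h
      obtain ⟨c, hc0, hcl⟩ := support_line hδ hmono hconv hx'I hy hxy
      refine ⟨(c, p x' - c * x'), fun _ => ⟨hc0, fun x hx => ?_, by ring⟩⟩
      have := hcl x hx
      simp only [hp]
      linarith
    · exact ⟨(0, 0), fun h' => absurd h' h⟩
  choose L hL using hch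
  refine ⟨⋃ k : ℤ, L '' Q k, countable_iUnion fun k => (hQc k).image L, ?_, ?_⟩
  · rintro cd hcd
    simp only [mem_iUnion, mem_image] at hcd
    obtain ⟨k, x', hx', rfl⟩ := hcd
    have hx'S := hQsub k hx'
    obtain ⟨h1, h2, h3⟩ := hx'S
    obtain ⟨hc0, hline, -⟩ := hL x' ⟨h1, h2⟩
    exact ⟨hc0, hline⟩
  · intro x0 hx0 hymax
    set k : ℤ := ⌈p x0 / ε⌉ - 1 with hk
    have hklt : (k : ℝ) * ε < p x0 := by
      have h1 : ((⌈p x0 / ε⌉ : ℝ) - 1) < p x0 / ε := by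
        have := Int.ceil_lt_add_one (p x0 / ε)
        linarith
      have : (k : ℝ) < p x0 / ε := by push_cast [hk]; linarith
      calc (k : ℝ) * ε < (p x0 / ε) * ε := by
            exact mul_lt_mul_of_pos_right this hε
        _ = p x0 := by field_simp
    have hkge : p x0 ≤ ((k : ℝ) + 1) * ε := by
      have h1 : p x0 / ε ≤ (⌈p x0 / ε⌉ : ℝ) := Int.le_ceil _
      have h2 : ((k : ℝ) + 1) = (⌈p x0 / ε⌉ : ℝ) := by push_cast [hk]; ring
      rw [h2]
      calc p x0 = (p x0 / ε) * ε := by field_simp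
        _ ≤ (⌈p x0 / ε⌉ : ℝ) * ε := mul_le_mul_of_nonneg_right h1 hε.le
    have hx0S : x0 ∈ S k := ⟨hx0, hymax, hklt⟩
    obtain ⟨x', hx'Q, hx'le⟩ := hQcof k x0 hx0S
    obtain ⟨h1, h2, h3⟩ := hQsub k hx'Q
    obtain ⟨hc0, hline, heq⟩ := hL x' ⟨h1, h2⟩
    refine ⟨L x', mem_iUnion.mpr ⟨k, mem_image_of_mem L hx'Q⟩, ?_⟩
    have : (L x').1 * x0 + (L x').2 ≥ (L x').1 * x' + (L x').2 := by nlinarith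
    rw [heq] at this
    have h4 : p x0 - ε ≤ (L x').1 * x0 + (L x').2 := by linarith
    simpa [hp] using h4
end

section Prob

variable {Ω : Type*} {m0 : MeasurableSpace Ω} {μ : Measure Ω} [IsProbabilityMeasure μ]
  {I : Set ℝ} {ℱ : Filtration ℕ m0} {X : ℕ → Ω → ℝ}

/-- Per-line conditional expectation estimate. -/
lemma line_condexp_le (hX : Submartingale X ℱ μ) (hXI : ∀ n ω, X n ω ∈ I)
    {f : ℝ → ℝ} (hint : ∀ n, Integrable (fun ω => Real.exp (f (X n ω))) μ)
    {m n : ℕ} (hmn : m ≤ n) {c d : ℝ} (hc : 0 ≤ c)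
    (hline : ∀ x ∈ I, c * x + d ≤ Real.exp (f x)) :
    (fun ω => c * X m ω + d) ≤ᵐ[μ] μ[fun ω => Real.exp (f (X n ω)) | ℱ m] := by
  have hm : (ℱ m : MeasurableSpace Ω) ≤ m0 := ℱ.le m
  have hintline : Integrable (fun ω => c * X n ω + d) μ :=
    ((hX.integrable n).const_mul c).add (integrable_const d)
  have h1 : μ[fun ω => c * X n ω + d | ℱ m] ≤ᵐ[μ]
      μ[fun ω => Real.exp (f (X n ω)) | ℱ m] :=
    condExp_mono hintline (hint n) (ae_of_all _ fun ω => hline (X n ω) (hXI n ω))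
  have h2 : μ[fun ω => c * X n ω + d | ℱ m] =ᵐ[μ]
      fun ω => c * (μ[X n | ℱ m]) ω + d := by
    have ha : (fun ω => c * X n ω + d) = (c • X n) + (fun _ => d) := by
      funext ω; simp [smul_eq_mul]
    rw [ha]
    calc μ[(c • X n) + (fun _ => d) | ℱ m]
        =ᵐ[μ] μ[c • X n | ℱ m] + μ[(fun _ => d) | ℱ m] :=
          condExp_add ((hX.integrable n).smul c) (integrable_const d) (ℱ m)
      _ =ᵐ[μ] fun ω => c * (μ[X n | ℱ m]) ω + d := by
          have hs := condExp_smul (μ := μ) (m := ℱ m) c (X n)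
          have hcst : μ[(fun _ => d) | ℱ m] = fun _ => d := condExp_const hm d
          filter_upwards [hs] with ω hω
          simp only [Pi.add_apply, hω, hcst, Pi.smul_apply, smul_eq_mul]
  have h3 : X m ≤ᵐ[μ] μ[X n | ℱ m] := hX.ae_le_condExp hmn
  filter_upwards [h1, h2, h3] with ω h1 h2 h3
  calc c * X m ω + d ≤ c * (μ[X n | ℱ m]) ω + d := by nlinarith
    _ = (μ[fun ω => c * X n ω + d | ℱ m]) ω := h2.symm
    _ ≤ (μ[fun ω => Real.exp (f (X n ω)) | ℱ m]) ω := h1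

/-- Endpoint case: on the event `X m = M` where `M` is the greatest element of `I`. -/
lemma endpoint_condexp (hX : Submartingale X ℱ μ) (hXI : ∀ n ω, X n ω ∈ I)
    {f : ℝ → ℝ} (hint : ∀ n, Integrable (fun ω => Real.exp (f (X n ω))) μ)
    {m n : ℕ} (hmn : m ≤ n) {M : ℝ} (hM : IsGreatest I M) :
    ∀ᵐ ω ∂μ, X m ω = M → Real.exp (f M) ≤ (μ[fun ω => Real.exp (f (X n ω)) | ℱ m]) ω := by
  have hm : (ℱ m : MeasurableSpace Ω) ≤ m0 := ℱ.le m
  set s : Set Ω := X m ⁻¹' {M} with hs_def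
  have hs : MeasurableSet[ℱ m] s :=
    (hX.stronglyAdapted m).measurable (measurableSet_singleton M)
  have hsm0 : MeasurableSet s := hm s hs
  have hXnle : ∀ ω, X n ω ≤ M := fun ω => hM.2 (hXI n ω)
  -- ∫_s X n ≥ M * μ(s)
  have hint_n := hX.integrable n
  have h1 : ∫ ω in s, X m ω ∂μ ≤ ∫ ω in s, X n ω ∂μ := by
    rw [← setIntegral_condExp hm hint_n hs]
    apply setIntegral_mono_ae (hX.integrable m).integrableOn
      integrable_condExp.integrableOn (hX.ae_le_condExp hmn)
  have h2 : ∫ ω in s, X m ω ∂μ = ∫ ω in s, (M : ℝ) ∂μ := by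
    apply setIntegral_congr_fun hsm0
    intro ω hω; exact hω
  -- conclude X n = M a.e. on s
  have h3 : ∫ ω in s, (M - X n ω) ∂μ ≤ 0 := by
    rw [integral_sub (integrableOn_const (C := M) (measure_ne_top _ _))
      hint_n.integrableOn]
    simp only [integral_const]
    rw [h2] at h1
    simp only [integral_const] at h1
    linarith
  have h4 : ∀ᵐ ω ∂μ.restrict s, M - X n ω = 0 := by
    have hnn : 0 ≤ᵐ[μ.restrict s] fun ω => M - X n ω :=
      ae_of_all _ fun ω => by simpa using sub_nonneg.mpr (hXnle ω)
    have hi : Integrable (fun ω => M - X n ω) (μ.restrict s) :=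
      (integrableOn_const (measure_ne_top _ _)).sub hint_n.integrableOn
    have := (integral_eq_zero_iff_of_nonneg_ae hnn hi).mp (le_antisymm h3 (integral_nonneg_of_ae hnn))
    filter_upwards [this] with ω hω using hω
  have h5 : ∀ᵐ ω ∂μ, ω ∈ s → X n ω = M := by
    have := (ae_restrict_iff' hsm0).mp h4
    filter_upwards [this] with ω hω hωs
    linarith [hω hωs]
  -- indicator function argument
  set g : Ω → ℝ := s.indicator (fun _ => Real.exp (f M)) with hg_def
  have hgm : StronglyMeasurable[ℱ m] g :=
    (stronglyMeasurable_const :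
      StronglyMeasurable[ℱ m] fun _ : Ω => Real.exp (f M)).indicator hs
  have hgint : Integrable g μ := (integrable_const _).indicator hsm0
  have hg_le : g ≤ᵐ[μ] fun ω => Real.exp (f (X n ω)) := by
    filter_upwards [h5] with ω hω
    by_cases hωs : ω ∈ s
    · rw [hg_def, Set.indicator_of_mem hωs, ← hω hωs]
    · rw [hg_def, Set.indicator_of_notMem hωs]
      exact (Real.exp_pos _).le
  have h6 : μ[g | ℱ m] ≤ᵐ[μ] μ[fun ω => Real.exp (f (X n ω)) | ℱ m] :=
    condExp_mono hgint (hint n) hg_le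
  have h7 : μ[g | ℱ m] = g := condExp_of_stronglyMeasurable hm hgm hgint
  filter_upwards [h6] with ω hω hωM
  have hωs : ω ∈ s := by simp [hs_def, hωM]
  calc Real.exp (f M) = g ω := by rw [hg_def, Set.indicator_of_mem hωs]
    _ = (μ[g | ℱ m]) ω := by rw [h7]
    _ ≤ _ := hω

end Prob

/-- **From submartingales to uniformly `e^{-δ}`-achieving processes.** If `X` is an
`I`-valued submartingale, `f : ℝ → ℝ` is non-decreasing and `δ`-convex on the interval `I`
(`δ ≥ 0`), and `e^{f(X n)}` is integrable for each `n`, then `Y n := e^{f(X n)}` is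
uniformly `e^{-δ}`-achieving: `E(Y n | ℱ m) ≥ e^{-δ} Y m` a.s. for all `m < n`. -/
theorem submartingale_to_uniformly_achieving
    {Ω : Type*} {m0 : MeasurableSpace Ω} {μ : Measure Ω} [IsProbabilityMeasure μ]
    {I : Set ℝ} (hI : Convex ℝ I)
    {ℱ : Filtration ℕ m0} {X : ℕ → Ω → ℝ}
    (hX : Submartingale X ℱ μ)
    (hXI : ∀ n ω, X n ω ∈ I)
    {δ : ℝ} (hδ : 0 ≤ δ) {f : ℝ → ℝ}
    (hmono : MonotoneOn f I)
    (hconv : ∀ x ∈ I, ∀ y ∈ I, ∀ t : ℝ, 0 ≤ t → t ≤ 1 →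
      f (t * x + (1 - t) * y) ≤ t * f x + (1 - t) * f y + δ)
    (hint : ∀ n, Integrable (fun ω => Real.exp (f (X n ω))) μ) :
    ∀ m n : ℕ, m < n →
      (fun ω => Real.exp (-δ) * Real.exp (f (X m ω))) ≤ᵐ[μ]
        μ[fun ω => Real.exp (f (X n ω)) | ℱ m] := by
  classical
  intro m n hmn
  choose T hTc hTprop hTcov using fun j : ℕ =>
    line_family (I := I) hδ hmono hconv (ε := 1 / ((j : ℝ) + 1)) (by positivity)
  have hae1 : ∀ᵐ ω ∂μ, ∀ j : ℕ, ∀ cd ∈ T j,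
      cd.1 * X m ω + cd.2 ≤ (μ[fun ω => Real.exp (f (X n ω)) | ℱ m]) ω := by
    rw [ae_all_iff]
    intro j
    rw [ae_ball_iff (hTc j)]
    intro cd hcd
    exact line_condexp_le hX hXI hint hmn.le (hTprop j cd hcd).1 (hTprop j cd hcd).2
  -- pointwise conclusion at non-maximal points
  have key : ∀ ω, (∀ j : ℕ, ∀ cd ∈ T j,
        cd.1 * X m ω + cd.2 ≤ (μ[fun ω => Real.exp (f (X n ω)) | ℱ m]) ω) →
      (∃ y ∈ I, X m ω < y) →
      Real.exp (-δ) * Real.exp (f (X m ω)) ≤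
        (μ[fun ω => Real.exp (f (X n ω)) | ℱ m]) ω := by
    intro ω h1 hy
    apply le_of_forall_pos_le_add
    intro ε hε
    obtain ⟨j, hj⟩ := exists_nat_one_div_lt hε
    obtain ⟨cd, hcdT, hcd⟩ := hTcov j (X m ω) (hXI m ω) hy
    have := h1 j cd hcdT
    have hjε : 1 / ((j : ℝ) + 1) ≤ ε := hj.le
    linarith
  by_cases hgr : ∃ M, IsGreatest I M
  · obtain ⟨M, hM⟩ := hgr
    have hae2 := endpoint_condexp hX hXI hint hmn.le hM
    filter_upwards [hae1, hae2] with ω h1 h2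
    by_cases hωM : X m ω = M
    · have : Real.exp (-δ) * Real.exp (f (X m ω)) ≤ Real.exp (f (X m ω)) := by
        rw [← Real.exp_add]
        exact Real.exp_le_exp.mpr (by linarith)
      calc Real.exp (-δ) * Real.exp (f (X m ω)) ≤ Real.exp (f (X m ω)) := this
        _ = Real.exp (f M) := by rw [hωM]
        _ ≤ _ := h2 hωM
    · refine key ω h1 ⟨M, hM.1, ?_⟩
      exact lt_of_le_of_ne (hM.2 (hXI m ω)) hωM
  · filter_upwards [hae1] with ω h1
    refine key ω h1 ?_
    push_neg at hgr
    have := hgr (X m ω)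
    rw [IsGreatest] at this
    push_neg at this
    have h2 := this (hXI m ω)
    simp only [upperBounds, Set.mem_setOf_eq] at h2
    push_neg at h2
    obtain ⟨y, hy, hy'⟩ := h2
    exact ⟨y, hy, hy'⟩
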